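/- Let φ be an LTL_P formula over a set V of propositional variables. If there is an ℕ-model N over the alphabet Σ_φ with N,0 ⊨ φ^ℕ, then there is a ℤ-model M with M,0 ⊨ φ. -/

import Mathlib

/-- LTL_P formulas over propositional variables `V`:
`p | ¬φ | φ₁ ∧ φ₂ | ◯_F φ | ◯_P φ | ◇_F φ | ◇_P φ`. -/
inductive LTLP (V : Type) : Type
  | var   : V → LTLP V
  | neg   : LTLP V → LTLP V
  | conj  : LTLP V → LTLP V → LTLP V
  | nextF : LTLP V → LTLP V
  | nextP : LTLP V → LTLP V
  | diaF  : LTLP V → LTLP V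
  | diaP  : LTLP V → LTLP V
  deriving DecidableEq

/-- Satisfaction `M,n ⊨ φ` of an LTL_P formula in a ℤ-model `M : ℤ → V → Prop`. -/
def ZSat {V : Type} (M : ℤ → V → Prop) : ℤ → LTLP V → Prop
  | n, .var p    => M n p
  | n, .neg ψ    => ¬ ZSat M n ψ
  | n, .conj ψ χ => ZSat M n ψ ∧ ZSat M n χ
  | n, .nextF ψ  => ZSat M (n + 1) ψ
  | n, .nextP ψ  => ZSat M (n - 1) ψ
  | n, .diaF ψ   => ∃ m, n ≤ m ∧ ZSat M m ψ
  | n, .diaP ψ   => ∃ m, m ≤ n ∧ ZSat M m ψ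

/-- Pure-future LTL formulas (no past operators). -/
inductive LTLF (W : Type) : Type
  | var   : W → LTLF W
  | neg   : LTLF W → LTLF W
  | conj  : LTLF W → LTLF W → LTLF W
  | nextF : LTLF W → LTLF W
  | diaF  : LTLF W → LTLF W
  deriving DecidableEq

/-- Satisfaction `N,n ⊨ φ` of a pure-future formula in an ℕ-model `N : ℕ → W → Prop`. -/
def NSat {W : Type} (N : ℕ → W → Prop) : ℕ → LTLF W → Prop
  | n, .var p    => N n p
  | n, .neg ψ    => ¬ NSat N n ψ
  | n, .conj ψ χ => NSat N n ψ ∧ NSat N n χ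
  | n, .nextF ψ  => NSat N (n + 1) ψ
  | n, .diaF ψ   => ∃ m, n ≤ m ∧ NSat N m ψ

/-- The extended alphabet Σ_φ: variables `p₊`, `p₋` for propositional variables `p`,
and `A₊^{Oψ}`, `A₋^{Oψ}` indexed by (temporal) formulas `Oψ`. -/
inductive Alph (V : Type) : Type
  | pos  : V → Alph V
  | negv : V → Alph V
  | Apos : LTLP V → Alph V
  | Aneg : LTLP V → Alph V
  deriving DecidableEq

/-- `ξ.isTemporal` holds iff the outermost symbol of `ξ` is a temporal operator. -/
def LTLP.isTemporal {V : Type} : LTLP V → Prop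
  | .nextF _ => True
  | .nextP _ => True
  | .diaF _  => True
  | .diaP _  => True
  | _        => False

/-- The translation `ξ̄_∗` (`s = true` for `∗ = +`, `s = false` for `∗ = −`):
a propositional formula over `Alph V`. -/
def bar {V : Type} (s : Bool) : LTLP V → LTLF (Alph V)
  | .var p    => .var (if s then .pos p else .negv p)
  | .neg ψ    => .neg (bar s ψ)
  | .conj ψ χ => .conj (bar s ψ) (bar s χ)
  | .nextF ψ  => .var (if s then .Apos (.nextF ψ) else .Aneg (.nextF ψ))
  | .nextP ψ  => .var (if s then .Apos (.nextP ψ) else .Aneg (.nextP ψ))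
  | .diaF ψ   => .var (if s then .Apos (.diaF ψ) else .Aneg (.diaF ψ))
  | .diaP ψ   => .var (if s then .Apos (.diaP ψ) else .Aneg (.diaP ψ))

/-- The set `sub φ` of subformulas of `φ`. -/
def subFmls {V : Type} : LTLP V → Set (LTLP V)
  | .var p    => {LTLP.var p}
  | .neg ψ    => insert (.neg ψ) (subFmls ψ)
  | .conj ψ χ => insert (.conj ψ χ) (subFmls ψ ∪ subFmls χ)
  | .nextF ψ  => insert (.nextF ψ) (subFmls ψ)
  | .nextP ψ  => insert (.nextP ψ) (subFmls ψ)
  | .diaF ψ   => insert (.diaF ψ) (subFmls ψ)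
  | .diaP ψ   => insert (.diaP ψ) (subFmls ψ)

/-- The induced ℕ-model `M′` over `Alph V` of a ℤ-model `M`. -/
def induced {V : Type} (M : ℤ → V → Prop) : ℕ → Alph V → Prop
  | n, .pos p  => M (n : ℤ) p
  | n, .negv p => M (-(n : ℤ)) p
  | n, .Apos ξ => ZSat M (n : ℤ) ξ
  | n, .Aneg ξ => ZSat M (-(n : ℤ)) ξ

/-- The conjunct of part (iii) of the pure-future translation associated with a temporal
subformula, evaluated at time `n` (trivial for non-temporal formulas). -/
def ClauseAt {V : Type} (N : ℕ → Alph V → Prop) (n : ℕ) : LTLP V → Prop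
  | .nextF ψ =>
      (N (n + 1) (.Aneg (.nextF ψ)) ↔ NSat N n (bar false ψ)) ∧
      (N n (.Apos (.nextF ψ)) ↔ NSat N (n + 1) (bar true ψ))
  | .nextP ψ =>
      (N (n + 1) (.Apos (.nextP ψ)) ↔ NSat N n (bar true ψ)) ∧
      (N n (.Aneg (.nextP ψ)) ↔ NSat N (n + 1) (bar false ψ))
  | .diaF ψ =>
      (N (n + 1) (.Aneg (.diaF ψ)) ↔ (N n (.Aneg (.diaF ψ)) ∨ NSat N (n + 1) (bar false ψ))) ∧
      (N n (.Apos (.diaF ψ)) ↔ ∃ m, n ≤ m ∧ NSat N m (bar true ψ))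
  | .diaP ψ =>
      (N (n + 1) (.Apos (.diaP ψ)) ↔ (N n (.Apos (.diaP ψ)) ∨ NSat N (n + 1) (bar true ψ))) ∧
      (N n (.Aneg (.diaP ψ)) ↔ ∃ m, n ≤ m ∧ NSat N m (bar false ψ))
  | _ => True

/-- `N,0 ⊨ φ^ℕ`: satisfaction at time 0 of the pure-future translation of `φ`, i.e. the
conjunction of (i) `φ̄₊`, (ii) `v₊ ↔ v₋` at time 0 for all variable pairs of Σ_φ, and
(iii) `□_F` of the clauses for all temporal subformulas of `φ` (so: the clauses hold at all
`n ∈ ℕ`). -/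
def SatPF {V : Type} (N : ℕ → Alph V → Prop) (φ : LTLP V) : Prop :=
  NSat N 0 (bar true φ) ∧
  (∀ p : V, LTLP.var p ∈ subFmls φ → (N 0 (.pos p) ↔ N 0 (.negv p))) ∧
  (∀ ξ ∈ subFmls φ, ξ.isTemporal → (N 0 (.Apos ξ) ↔ N 0 (.Aneg ξ))) ∧
  (∀ n : ℕ, ∀ ξ ∈ subFmls φ, ClauseAt N n ξ)

/-! ### Auxiliary lemmas -/

lemma mem_subFmls_self {V : Type} (ξ : LTLP V) : ξ ∈ subFmls ξ := by
  cases ξ <;> simp [subFmls]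

lemma subFmls_subset {V : Type} (φ : LTLP V) :
    ∀ ξ ∈ subFmls φ, subFmls ξ ⊆ subFmls φ := by
  induction φ with
  | var p =>
      intro ξ hξ
      simp only [subFmls, Set.mem_singleton_iff] at hξ
      subst hξ; exact subset_rfl
  | neg ψ ih =>
      intro ξ hξ
      rcases Set.mem_insert_iff.mp hξ with h | h
      · subst h; exact subset_rfl
      · exact (ih ξ h).trans (Set.subset_insert _ _)
  | conj ψ χ ihψ ihχ =>
      intro ξ hξ
      rcases Set.mem_insert_iff.mp hξ with h | h
      · subst h; exact subset_rfl
      · rcases h with h | h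
        · exact fun x hx => Set.mem_insert_iff.mpr (Or.inr (Set.mem_union_left _ (ihψ ξ h hx)))
        · exact fun x hx => Set.mem_insert_iff.mpr (Or.inr (Set.mem_union_right _ (ihχ ξ h hx)))
  | nextF ψ ih =>
      intro ξ hξ
      rcases Set.mem_insert_iff.mp hξ with h | h
      · subst h; exact subset_rfl
      · exact (ih ξ h).trans (Set.subset_insert _ _)
  | nextP ψ ih =>
      intro ξ hξ
      rcases Set.mem_insert_iff.mp hξ with h | h
      · subst h; exact subset_rfl
      · exact (ih ξ h).trans (Set.subset_insert _ _)
  | diaF ψ ih =>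
      intro ξ hξ
      rcases Set.mem_insert_iff.mp hξ with h | h
      · subst h; exact subset_rfl
      · exact (ih ξ h).trans (Set.subset_insert _ _)
  | diaP ψ ih =>
      intro ξ hξ
      rcases Set.mem_insert_iff.mp hξ with h | h
      · subst h; exact subset_rfl
      · exact (ih ξ h).trans (Set.subset_insert _ _)


section BarSimp
variable {V : Type} (ψ : LTLP V)
@[simp] lemma bar_true_nextF : bar true (.nextF ψ) = .var (.Apos (.nextF ψ)) := rfl
@[simp] lemma bar_false_nextF : bar false (.nextF ψ) = .var (.Aneg (.nextF ψ)) := rfl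
@[simp] lemma bar_true_nextP : bar true (.nextP ψ) = .var (.Apos (.nextP ψ)) := rfl
@[simp] lemma bar_false_nextP : bar false (.nextP ψ) = .var (.Aneg (.nextP ψ)) := rfl
@[simp] lemma bar_true_diaF : bar true (.diaF ψ) = .var (.Apos (.diaF ψ)) := rfl
@[simp] lemma bar_false_diaF : bar false (.diaF ψ) = .var (.Aneg (.diaF ψ)) := rfl
@[simp] lemma bar_true_diaP : bar true (.diaP ψ) = .var (.Apos (.diaP ψ)) := rfl
@[simp] lemma bar_false_diaP : bar false (.diaP ψ) = .var (.Aneg (.diaP ψ)) := rfl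
end BarSimp

/-- The ℤ-model built from an ℕ-model over `Alph V`. -/
def Mdl {V : Type} (N : ℕ → Alph V → Prop) : ℤ → V → Prop :=
  fun n p => if 0 ≤ n then N n.toNat (.pos p) else N (-n).toNat (.negv p)

lemma Mdl_pos {V : Type} (N : ℕ → Alph V → Prop) (n : ℕ) (p : V) :
    Mdl N (n : ℤ) p ↔ N n (.pos p) := by
  simp [Mdl]

lemma Mdl_neg {V : Type} (N : ℕ → Alph V → Prop) {n : ℕ} (hn : 0 < n) (p : V) :
    Mdl N (-(n : ℤ)) p ↔ N n (.negv p) := by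
  have h1 : ¬ (0:ℤ) ≤ -(n:ℤ) := by omega
  simp [Mdl, h1, hn.ne']

lemma key_lemma {V : Type} (φ : LTLP V) (N : ℕ → Alph V → Prop) (h : SatPF N φ) :
    ∀ ξ : LTLP V, ξ ∈ subFmls φ → ∀ n : ℕ,
      (ZSat (Mdl N) (n : ℤ) ξ ↔ NSat N n (bar true ξ)) ∧
      (ZSat (Mdl N) (-(n : ℤ)) ξ ↔ NSat N n (bar false ξ)) := by
  obtain ⟨h1, h2, h3, h4⟩ := h
  set M := Mdl N with hM
  intro ξ
  induction ξ with
  | var p =>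
      intro hmem n
      constructor
      · simpa [ZSat, NSat, bar] using Mdl_pos N n p
      · rcases Nat.eq_zero_or_pos n with rfl | hn
        · simpa [ZSat, NSat, bar, Mdl, hM] using h2 p hmem
        · simpa [ZSat, NSat, bar] using Mdl_neg N hn p
  | neg ψ ih =>
      intro hmem n
      have hψ : ψ ∈ subFmls φ :=
        subFmls_subset φ _ hmem (Set.mem_insert_iff.mpr (Or.inr (mem_subFmls_self ψ)))
      have IH := ih hψ n
      constructor
      · simp only [ZSat, NSat, bar_true_nextF, bar_false_nextF, bar_true_nextP, bar_false_nextP]; exact not_congr IH.1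
      · simp only [ZSat, NSat, bar_true_nextF, bar_false_nextF, bar_true_nextP, bar_false_nextP]; exact not_congr IH.2
  | conj ψ χ ihψ ihχ =>
      intro hmem n
      have hψ : ψ ∈ subFmls φ :=
        subFmls_subset φ _ hmem
          (Set.mem_insert_iff.mpr (Or.inr (Set.mem_union_left _ (mem_subFmls_self ψ))))
      have hχ : χ ∈ subFmls φ :=
        subFmls_subset φ _ hmem
          (Set.mem_insert_iff.mpr (Or.inr (Set.mem_union_right _ (mem_subFmls_self χ))))
      have IH1 := ihψ hψ n
      have IH2 := ihχ hχ n
      constructor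
      · simp only [ZSat, NSat, bar_true_nextF, bar_false_nextF, bar_true_nextP, bar_false_nextP]; exact and_congr IH1.1 IH2.1
      · simp only [ZSat, NSat, bar_true_nextF, bar_false_nextF, bar_true_nextP, bar_false_nextP]; exact and_congr IH1.2 IH2.2
  | nextF ψ ih =>
      intro hmem
      have hψ : ψ ∈ subFmls φ :=
        subFmls_subset φ _ hmem (Set.mem_insert_iff.mpr (Or.inr (mem_subFmls_self ψ)))
      have IH := ih hψ
      have hc : ∀ m, ClauseAt N m (.nextF ψ) := fun m => h4 m _ hmem
      simp only [ClauseAt] at hc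
      intro n
      constructor
      · simp only [ZSat, NSat, bar_true_nextF, bar_false_nextF, bar_true_nextP, bar_false_nextP]
        have e : ((n:ℤ) + 1) = ((n+1 : ℕ) : ℤ) := by omega
        rw [e, (IH (n+1)).1]
        exact ((hc n).2).symm
      · simp only [ZSat, NSat, bar_true_nextF, bar_false_nextF, bar_true_nextP, bar_false_nextP]
        rcases n with _ | k
        · have e : (-((0:ℕ):ℤ) + 1) = ((1 : ℕ) : ℤ) := by omega
          rw [e, (IH 1).1]
          exact ((hc 0).2).symm.trans (h3 _ hmem trivial)
        · have e : (-((k+1:ℕ):ℤ) + 1) = -((k:ℕ) : ℤ) := by omega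
          rw [e, (IH k).2]
          exact ((hc k).1).symm
  | nextP ψ ih =>
      intro hmem
      have hψ : ψ ∈ subFmls φ :=
        subFmls_subset φ _ hmem (Set.mem_insert_iff.mpr (Or.inr (mem_subFmls_self ψ)))
      have IH := ih hψ
      have hc : ∀ m, ClauseAt N m (.nextP ψ) := fun m => h4 m _ hmem
      simp only [ClauseAt] at hc
      intro n
      constructor
      · simp only [ZSat, NSat, bar_true_nextF, bar_false_nextF, bar_true_nextP, bar_false_nextP]
        rcases n with _ | k
        · have e : (((0:ℕ):ℤ) - 1) = -((1 : ℕ) : ℤ) := by omega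
          rw [e, (IH 1).2]
          exact ((hc 0).2).symm.trans (h3 _ hmem trivial).symm
        · have e : (((k+1:ℕ):ℤ) - 1) = ((k:ℕ) : ℤ) := by omega
          rw [e, (IH k).1]
          exact ((hc k).1).symm
      · simp only [ZSat, NSat, bar_true_nextF, bar_false_nextF, bar_true_nextP, bar_false_nextP]
        have e : (-((n:ℕ):ℤ) - 1) = -((n+1 : ℕ) : ℤ) := by omega
        rw [e, (IH (n+1)).2]
        exact ((hc n).2).symm
  | diaF ψ ih =>
      intro hmem
      have hψ : ψ ∈ subFmls φ :=
        subFmls_subset φ _ hmem (Set.mem_insert_iff.mpr (Or.inr (mem_subFmls_self ψ)))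
      have IH := ih hψ
      have hc : ∀ m, ClauseAt N m (.diaF ψ) := fun m => h4 m _ hmem
      simp only [ClauseAt] at hc
      have pospart : ∀ n : ℕ, ZSat M (n:ℤ) (.diaF ψ) ↔ N n (.Apos (.diaF ψ)) := by
        intro n
        rw [(hc n).2]
        simp only [ZSat]
        constructor
        · rintro ⟨m, hm, hz⟩
          have e : ((m.toNat : ℕ) : ℤ) = m := by omega
          rw [← e] at hz
          exact ⟨m.toNat, by omega, (IH m.toNat).1.mp hz⟩
        · rintro ⟨m, hm, hn'⟩
          exact ⟨(m:ℤ), by exact_mod_cast hm, (IH m).1.mpr hn'⟩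
      have negpart : ∀ n : ℕ, ZSat M (-(n:ℤ)) (.diaF ψ) ↔ N n (.Aneg (.diaF ψ)) := by
        intro n
        induction n with
        | zero => simpa using (pospart 0).trans (h3 _ hmem trivial)
        | succ k ihk =>
            have split : ZSat M (-((k+1:ℕ):ℤ)) (.diaF ψ) ↔
                (ZSat M (-(k:ℤ)) (.diaF ψ) ∨ ZSat M (-((k+1:ℕ):ℤ)) ψ) := by
              simp only [ZSat]
              constructor
              · rintro ⟨m, hm, hz⟩
                rcases eq_or_lt_of_le hm with heq | hlt
                · exact Or.inr (heq ▸ hz)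
                · exact Or.inl ⟨m, by omega, hz⟩
              · rintro (⟨m, hm, hz⟩ | hz)
                · exact ⟨m, by omega, hz⟩
                · exact ⟨_, le_refl _, hz⟩
            rw [split, ihk, (IH (k+1)).2]
            exact ((hc k).1).symm
      intro n
      constructor
      · simpa [NSat, bar] using pospart n
      · simpa [NSat, bar] using negpart n
  | diaP ψ ih =>
      intro hmem
      have hψ : ψ ∈ subFmls φ :=
        subFmls_subset φ _ hmem (Set.mem_insert_iff.mpr (Or.inr (mem_subFmls_self ψ)))
      have IH := ih hψ
      have hc : ∀ m, ClauseAt N m (.diaP ψ) := fun m => h4 m _ hmem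
      simp only [ClauseAt] at hc
      have negpart : ∀ n : ℕ, ZSat M (-(n:ℤ)) (.diaP ψ) ↔ N n (.Aneg (.diaP ψ)) := by
        intro n
        rw [(hc n).2]
        simp only [ZSat]
        constructor
        · rintro ⟨m, hm, hz⟩
          have e : (-(((-m).toNat : ℕ) : ℤ)) = m := by omega
          rw [← e] at hz
          exact ⟨(-m).toNat, by omega, (IH (-m).toNat).2.mp hz⟩
        · rintro ⟨m, hm, hn'⟩
          exact ⟨-(m:ℤ), by omega, (IH m).2.mpr hn'⟩
      have pospart : ∀ n : ℕ, ZSat M (n:ℤ) (.diaP ψ) ↔ N n (.Apos (.diaP ψ)) := by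
        intro n
        induction n with
        | zero => simpa using (negpart 0).trans (h3 _ hmem trivial).symm
        | succ k ihk =>
            have split : ZSat M ((k+1:ℕ):ℤ) (.diaP ψ) ↔
                (ZSat M ((k:ℕ):ℤ) (.diaP ψ) ∨ ZSat M ((k+1:ℕ):ℤ) ψ) := by
              simp only [ZSat]
              constructor
              · rintro ⟨m, hm, hz⟩
                rcases eq_or_lt_of_le hm with heq | hlt
                · exact Or.inr (heq.symm ▸ hz)
                · exact Or.inl ⟨m, by omega, hz⟩
              · rintro (⟨m, hm, hz⟩ | hz)
                · exact ⟨m, by omega, hz⟩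
                · exact ⟨_, le_refl _, hz⟩
            rw [split, ihk, (IH (k+1)).1]
            exact ((hc k).1).symm
      intro n
      constructor
      · simpa [NSat, bar] using pospart n
      · simpa [NSat, bar] using negpart n

/-- If some ℕ-model `N` over Σ_φ satisfies `N,0 ⊨ φ^ℕ`, then there is a
ℤ-model `M` with `M,0 ⊨ φ`. -/
theorem pure_future_sat_to_zmodel {V : Type} (φ : LTLP V) (N : ℕ → Alph V → Prop)
    (h : SatPF N φ) :
    ∃ M : ℤ → V → Prop, ZSat M 0 φ := by
  have := (key_lemma φ N h φ (mem_subFmls_self φ) 0).1.mpr h.1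
  exact ⟨Mdl N, by simpa using this⟩
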